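/- If f : [a,b] → ℝ is continuously differentiable and f' is Φ'-superadditive (i.e., f'(y) - f'(x) ≥ Φ'(y-x) for all a ≤ x ≤ y ≤ b), where Φ : [0, b-a] → ℝ≥0 is continuously differentiable with Φ' ≥ 0 and Φ(0) = 0, then for all x, y ∈ [a,b], f(y) - f(x) - f'(x)(y - x) - Φ(|y - x|) ≥ 0. -/

import Mathlib

/-- gradient inequality for functions with Φ'-superadditive derivative. -/
theorem stmt0 (a b : ℝ) (hab : a < b) (f f' Φ Φ' : ℝ → ℝ)
    (hf : ∀ x ∈ Set.Icc a b, HasDerivAt f (f' x) x)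
    (hf'c : ContinuousOn f' (Set.Icc a b))
    (hΦ : ∀ x ∈ Set.Icc 0 (b - a), HasDerivAt Φ (Φ' x) x)
    (hΦ'c : ContinuousOn Φ' (Set.Icc 0 (b - a)))
    (hΦnn : ∀ x ∈ Set.Icc 0 (b - a), 0 ≤ Φ x)
    (hΦ'nn : ∀ x ∈ Set.Icc 0 (b - a), 0 ≤ Φ' x)
    (hΦ0 : Φ 0 = 0)
    (hsup : ∀ x y, a ≤ x → x ≤ y → y ≤ b → Φ' (y - x) ≤ f' y - f' x) :
    ∀ x ∈ Set.Icc a b, ∀ y ∈ Set.Icc a b,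
      0 ≤ f y - f x - f' x * (y - x) - Φ |y - x| := by
  intro x hx y hy
  rcases lt_trichotomy x y with hxy | rfl | hyx
  · -- case x < y
    rw [abs_of_nonneg (by linarith : (0:ℝ) ≤ y - x)]
    set g : ℝ → ℝ := fun t => f t - f' x * t - Φ (t - x) with hg
    set g' : ℝ → ℝ := fun t => f' t - f' x - Φ' (t - x) with hg'
    have hmem : ∀ t ∈ Set.Icc x y, t ∈ Set.Icc a b := fun t ht =>
      ⟨le_trans hx.1 ht.1, le_trans ht.2 hy.2⟩
    have hmem2 : ∀ t ∈ Set.Icc x y, t - x ∈ Set.Icc 0 (b - a) := fun t ht =>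
      ⟨by linarith [ht.1], by linarith [ht.2, hx.1, hy.2]⟩
    have hgd : ∀ t ∈ Set.Icc x y, HasDerivAt g (g' t) t := by
      intro t ht
      have h1 := (hf t (hmem t ht)).sub ((hasDerivAt_id t).const_mul (f' x))
      have h2 : HasDerivAt (fun t => Φ (t - x)) (Φ' (t - x)) t := by
        have := (hΦ (t - x) (hmem2 t ht)).comp t ((hasDerivAt_id t).sub_const x)
        simpa [Function.comp_def] using this
      have h3 := h1.sub h2
      simp only [mul_one] at h3
      exact h3
    obtain ⟨c, hc, hceq⟩ := exists_hasDerivAt_eq_slope g g' hxy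
      (fun t ht => (hgd t ht).continuousAt.continuousWithinAt)
      (fun t ht => hgd t (Set.mem_Icc_of_Ioo ht))
    have hc' : 0 ≤ g' c := by
      have := hsup x c hx.1 (le_of_lt hc.1) (le_trans (le_of_lt hc.2) hy.2)
      simp only [hg']
      linarith
    have hslope : 0 ≤ (g y - g x) / (y - x) := hceq ▸ hc'
    have : 0 ≤ g y - g x := by
      have h := mul_nonneg hslope (by linarith : (0:ℝ) ≤ y - x)
      rwa [div_mul_cancel₀ _ (by linarith : y - x ≠ 0)] at h
    simp only [hg, sub_self, hΦ0] at this
    linarith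
  · -- case x = y
    simp [hΦ0]
  · -- case y < x
    rw [abs_of_nonpos (by linarith : y - x ≤ 0)]
    set g : ℝ → ℝ := fun t => f t - f' x * t - Φ (x - t) with hg
    set g' : ℝ → ℝ := fun t => f' t - f' x + Φ' (x - t) with hg'
    have hmem : ∀ t ∈ Set.Icc y x, t ∈ Set.Icc a b := fun t ht =>
      ⟨le_trans hy.1 ht.1, le_trans ht.2 hx.2⟩
    have hmem2 : ∀ t ∈ Set.Icc y x, x - t ∈ Set.Icc 0 (b - a) := fun t ht =>
      ⟨by linarith [ht.2], by linarith [ht.1, hy.1, hx.2]⟩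
    have hgd : ∀ t ∈ Set.Icc y x, HasDerivAt g (g' t) t := by
      intro t ht
      have h1 := (hf t (hmem t ht)).sub ((hasDerivAt_id t).const_mul (f' x))
      have h2 : HasDerivAt (fun t => Φ (x - t)) (-Φ' (x - t)) t := by
        have := (hΦ (x - t) (hmem2 t ht)).comp t ((hasDerivAt_const t x).sub (hasDerivAt_id t))
        simpa [Function.comp_def] using this
      have h3 := h1.sub h2
      simp only [mul_one, sub_neg_eq_add] at h3
      exact h3
    obtain ⟨c, hc, hceq⟩ := exists_hasDerivAt_eq_slope g g' hyx
      (fun t ht => (hgd t ht).continuousAt.continuousWithinAt)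
      (fun t ht => hgd t (Set.mem_Icc_of_Ioo ht))
    have hc' : g' c ≤ 0 := by
      have := hsup c x (le_trans hy.1 (le_of_lt hc.1)) (le_of_lt hc.2) hx.2
      simp only [hg']
      linarith
    have hslope : (g x - g y) / (x - y) ≤ 0 := hceq ▸ hc'
    have : g x - g y ≤ 0 := by
      have := mul_nonpos_of_nonpos_of_nonneg hslope (by linarith : (0:ℝ) ≤ x - y)
      rwa [div_mul_cancel₀ _ (by linarith : x - y ≠ 0)] at this
    simp only [hg, sub_self, hΦ0] at this
    have hxy' : x - y = -(y - x) := by ring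
    rw [← hxy']
    linarith
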